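/- arXiv:1206.0327 — 2 statements merged into one kernel-verified Lean document; each statement's English description precedes it below -/
import Mathlib

section
/- The linear anti-homomorphism ι: kQ → kℒ is injective. -/
set_option maxHeartbeats 1000000

/-! # Common definitions: trees, forests, descent algebras -/

/-- Labeled binary trees: leaves carry a natural number (positive in valid forests),
internal nodes carry a label. -/
inductive LTree : Type
  | leaf : ℕ → LTree
  | node : ℕ → LTree → LTree → LTree
  deriving DecidableEq

instance : Inhabited LTree := ⟨LTree.leaf 1⟩

/-- Unlabeled binary trees with natural number leaves. -/
inductive UTree : Type
  | leaf : ℕ → UTree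
  | node : UTree → UTree → UTree
  deriving DecidableEq

instance : Inhabited UTree := ⟨UTree.leaf 1⟩

namespace LTree

/-- The value of a tree: the sum of its leaf entries. -/
def value : LTree → ℕ
  | leaf x => x
  | node _ t1 t2 => t1.value + t2.value

/-- The foliage of a tree: the list of its leaf entries, left to right. -/
def foliage : LTree → List ℕ
  | leaf x => [x]
  | node _ t1 t2 => t1.foliage ++ t2.foliage

/-- The number of internal nodes. -/
def numNodes : LTree → ℕ
  | leaf _ => 0
  | node _ t1 t2 => t1.numNodes + t2.numNodes + 1

/-- The list of node labels (in preorder). -/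
def labels : LTree → List ℕ
  | leaf _ => []
  | node i t1 t2 => i :: (t1.labels ++ t2.labels)

/-- Labels strictly increase downwards, starting above `p`. -/
def incrFrom : ℕ → LTree → Prop
  | _, leaf _ => True
  | p, node i t1 t2 => p < i ∧ incrFrom i t1 ∧ incrFrom i t2

/-- Shift all node labels up by `m`. -/
def shift (m : ℕ) : LTree → LTree
  | leaf x => leaf x
  | node i t1 t2 => node (i + m) (t1.shift m) (t2.shift m)

/-- Decrease all node labels by one. -/
def dec : LTree → LTree
  | leaf x => leaf x
  | node i t1 t2 => node (i - 1) t1.dec t2.dec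

/-- A tree is aligned if at every node the value of the left subtree is
strictly smaller than the value of the right subtree. -/
def Aligned : LTree → Prop
  | leaf _ => True
  | node _ t1 t2 => t1.value < t2.value ∧ t1.Aligned ∧ t2.Aligned

/-- Replace the leaves of a tree (left to right) by the trees from the supplied list;
returns the new tree together with the unused trees. -/
def graft : LTree → List LTree → LTree × List LTree
  | leaf x, [] => (leaf x, [])
  | leaf _, t :: ts => (t, ts)
  | node i t1 t2, ts =>
    let p1 := t1.graft ts
    let p2 := t2.graft p1.2
    (node i p1.1 p2.1, p2.2)

/-- Find the node with label `i` and return the values of its two subtrees. -/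
def findLab (i : ℕ) : LTree → Option (ℕ × ℕ)
  | leaf _ => none
  | node j t1 t2 =>
    if j = i then some (t1.value, t2.value)
    else (t1.findLab i).orElse (fun _ => t2.findLab i)

/-- The label at the root, if the tree is a node. -/
def rootLabel? : LTree → Option ℕ
  | leaf _ => none
  | node i _ _ => some i

/-- The subtree at a position (list of booleans; `false` = left, `true` = right). -/
def subtreeAt : LTree → List Bool → Option LTree
  | t, [] => some t
  | leaf _, _ :: _ => none
  | node _ t1 t2, b :: p => (if b then t2 else t1).subtreeAt p

/-- Replace the subtree at a position. -/
def replaceAt : LTree → List Bool → LTree → LTree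
  | _, [], u => u
  | leaf x, _ :: _, _ => leaf x
  | node i t1 t2, b :: p, u =>
    if b then node i t1 (t2.replaceAt p u) else node i (t1.replaceAt p u) t2

end LTree

namespace UTree

/-- The value of an unlabeled tree. -/
def value : UTree → ℕ
  | leaf x => x
  | node t1 t2 => t1.value + t2.value

/-- The foliage of an unlabeled tree. -/
def foliage : UTree → List ℕ
  | leaf x => [x]
  | node t1 t2 => t1.foliage ++ t2.foliage

/-- The number of internal nodes. -/
def numNodes : UTree → ℕ
  | leaf _ => 0
  | node t1 t2 => t1.numNodes + t2.numNodes + 1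

/-- All leaf entries are positive. -/
def leavesPos : UTree → Prop
  | leaf x => 0 < x
  | node t1 t2 => t1.leavesPos ∧ t2.leavesPos

/-- An unlabeled tree is aligned if at every node the left value is smaller
than the right value. -/
def Aligned : UTree → Prop
  | leaf _ => True
  | node t1 t2 => t1.value < t2.value ∧ t1.Aligned ∧ t2.Aligned

/-- No node has two leaf children bearing the same value. -/
def NoTwin : UTree → Prop
  | leaf _ => True
  | node t1 t2 => t1.NoTwin ∧ t2.NoTwin ∧ ¬ ∃ a, t1 = leaf a ∧ t2 = leaf a

/-- Graft: replace leaves (left to right) by trees from the supplied list. -/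
def graft : UTree → List UTree → UTree × List UTree
  | leaf x, [] => (leaf x, [])
  | leaf _, t :: ts => (t, ts)
  | node t1 t2, ts =>
    let p1 := t1.graft ts
    let p2 := t2.graft p1.2
    (node p1.1 p2.1, p2.2)

/-- The total order on unlabeled trees: compare values, then (reversed) number of
nodes, then recursively the left and right subtrees. -/
def ltt : UTree → UTree → Prop
  | leaf a, leaf b => a < b
  | leaf a, node y1 y2 => a < (node y1 y2).value
  | node x1 x2, leaf b => (node x1 x2).value ≤ b
  | node x1 x2, node y1 y2 =>
      (node x1 x2).value < (node y1 y2).value ∨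
      ((node x1 x2).value = (node y1 y2).value ∧
        ((node y1 y2).numNodes < (node x1 x2).numNodes ∨
          ((node x1 x2).numNodes = (node y1 y2).numNodes ∧
            (ltt x1 y1 ∨ (x1 = y1 ∧ ltt x2 y2)))))

end UTree

/-- Erase the node labels of a labeled tree. -/
def eraseT : LTree → UTree
  | .leaf x => .leaf x
  | .node _ t1 t2 => .node (eraseT t1) (eraseT t2)

/-! ## Labeled forests -/

/-- The squash of a forest: the list of values of its trees. -/
def squash (X : List LTree) : List ℕ := X.map LTree.value

/-- The foliage of a forest. -/
def forestFoliage (X : List LTree) : List ℕ := X.flatMap LTree.foliage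

/-- The length of a forest: its total number of nodes. -/
def forestLen (X : List LTree) : ℕ := (X.map LTree.numNodes).sum

/-- The value of a forest: the sum of the values of its trees. -/
def forestValue (X : List LTree) : ℕ := (X.map LTree.value).sum

/-- All node labels of a forest. -/
def forestLabels (X : List LTree) : List ℕ := X.flatMap LTree.labels

/-- A list of labeled trees is a labeled forest if every node's label exceeds that
of its parent, the labels used are exactly `1, 2, …, l` where `l` is the number
of nodes, and all leaves are positive. -/
def IsLForest (X : List LTree) : Prop :=
  (∀ t ∈ X, t.incrFrom 0) ∧
  (forestLabels X).Perm (List.range' 1 (forestLen X)) ∧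
  ∀ x ∈ forestFoliage X, 0 < x

/-- A forest is aligned if all its trees are. -/
def ForestAligned (X : List LTree) : Prop := ∀ t ∈ X, t.Aligned

/-- Replace the leaves of the forest `X` (left to right) by the trees of `ys`. -/
def graftForest : List LTree → List LTree → List LTree
  | [], _ => []
  | t :: ts, ys =>
    let p := t.graft ys
    p.1 :: graftForest ts p.2

/-- The product `X • Y` of labeled forests: replace the `i`-th leaf of `X` by the
`i`-th tree of `Y`, after shifting all node labels of `Y` up by `ℓ(X)`.
(Meaningful when the foliage of `X` equals the squash of `Y`.) -/
def bullet (X Y : List LTree) : List LTree :=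
  graftForest X (Y.map (LTree.shift (forestLen X)))

/-- The forest of leaves determined by a composition. -/
def leavesOf (c : List ℕ) : List LTree := c.map LTree.leaf

/-- Iterated product `X₁ • (X₂ • (⋯ • Xₗ))` of a list of forests. -/
def chainProd : List (List LTree) → List LTree
  | [] => []
  | [A] => A
  | A :: F => bullet A (chainProd F)

/-- Find the node with label `i` in a forest; return the values of its subtrees. -/
def forestFindLab (i : ℕ) : List LTree → Option (ℕ × ℕ)
  | [] => none
  | t :: r => (t.findLab i).orElse (fun _ => forestFindLab i r)

/-! ## Unlabeled forests -/

def squashU (X : List UTree) : List ℕ := X.map UTree.value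
def foliageU (X : List UTree) : List ℕ := X.flatMap UTree.foliage
def forestLenU (X : List UTree) : ℕ := (X.map UTree.numNodes).sum
def forestValueU (X : List UTree) : ℕ := (X.map UTree.value).sum

/-- An unlabeled forest is valid when all its leaves are positive. -/
def IsUForest (X : List UTree) : Prop := ∀ x ∈ foliageU X, 0 < x

def ForestAlignedU (X : List UTree) : Prop := ∀ t ∈ X, t.Aligned

def graftForestU : List UTree → List UTree → List UTree
  | [], _ => []
  | t :: ts, ys =>
    let p := t.graft ys
    p.1 :: graftForestU ts p.2

/-- The product of unlabeled forests (no label adjustment needed). -/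
def bulletU (X Y : List UTree) : List UTree := graftForestU X Y

/-- Erase all node labels of a labeled forest. -/
def eraseF (X : List LTree) : List UTree := X.map eraseT
/-! ## The difference operator δ and the map Δ -/

/-- Locate the part of the forest whose root is the node labeled `1`; return its
(0-based) index together with the forest obtained by splitting that part into its
two subtrees. -/
def splitAt1 : List LTree → Option (ℕ × List LTree)
  | [] => none
  | LTree.node i t1 t2 :: rest =>
      if i = 1 then some (0, t1 :: t2 :: rest)
      else (splitAt1 rest).map (fun p => (p.1 + 1, LTree.node i t1 t2 :: p.2))
  | LTree.leaf x :: rest => (splitAt1 rest).map (fun p => (p.1 + 1, LTree.leaf x :: p.2))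

/-- Swap the entries in positions `i` and `i+1` (0-based) of a list. -/
def swapAdj {α : Type} : ℕ → List α → List α
  | 0, a :: b :: r => b :: a :: r
  | n + 1, a :: r => a :: swapAdj n r
  | _, l => l

/-- The difference operator `δ` on the span of labeled forests: if `ℓ(X) = 0` then
`δ(X) = X`; otherwise, if the node labeled 1 is the root of the `i`-th part with
subtrees `X₁, X₂`, then `δ(X) = Y − Y.(i,i+1)` where `Y` is obtained by replacing
the `i`-th part by the parts `X₁ X₂` and decreasing all labels by one. -/
noncomputable def deltaF (k : Type) [Ring k] (X : List LTree) : (List LTree) →₀ k :=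
  match splitAt1 X with
  | none => Finsupp.single X 1
  | some (i, Y) =>
      Finsupp.single (Y.map LTree.dec) 1 - Finsupp.single (swapAdj i (Y.map LTree.dec)) 1

/-- The linear extension of `δ`. -/
noncomputable def deltaLin (k : Type) [Ring k] :
    ((List LTree) →₀ k) →ₗ[k] ((List LTree) →₀ k) :=
  (Finsupp.lift ((List LTree) →₀ k) k (List LTree)) (deltaF k)

/-- `Δ(X) = δ^{ℓ(X)}(X)`, recorded as an element of the free associative algebra
with basis the compositions (identifying a forest of length 0 with its foliage). -/
noncomputable def DeltaComp (k : Type) [Ring k] (X : List LTree) : (List ℕ) →₀ k :=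
  Finsupp.mapDomain forestFoliage
    ((fun v => deltaLin k v)^[forestLen X] (Finsupp.single X 1))

/-- The linear map `Δ : kL → kℕ*`. -/
noncomputable def DeltaMap (k : Type) [Ring k] : ((List LTree) →₀ k) →ₗ[k] ((List ℕ) →₀ k) :=
  (Finsupp.lift ((List ℕ) →₀ k) k (List LTree)) (DeltaComp k)

/-! ## Pólya orbit sums and products on the spans -/

/-- The Pólya orbit sum `[X]` of a labeled forest: the sum of all distinct
rearrangements of its parts. -/
noncomputable def pol (k : Type) [Semiring k] (X : List LTree) : (List LTree) →₀ k :=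
  ∑ Y ∈ X.permutations.toFinset, Finsupp.single Y 1

/-- The Pólya orbit sum of an unlabeled forest. -/
noncomputable def polU (k : Type) [Semiring k] (X : List UTree) : (List UTree) →₀ k :=
  ∑ Y ∈ X.permutations.toFinset, Finsupp.single Y 1

/-- The bilinear product on `kL`: `X • Y` when foliage of `X` equals squash of `Y`,
and `0` otherwise. -/
noncomputable def mulL (k : Type) [Semiring k] (f g : (List LTree) →₀ k) : (List LTree) →₀ k :=
  f.sum fun X a => g.sum fun Y b =>
    if forestFoliage X = squash Y then Finsupp.single (bullet X Y) (a * b) else 0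

/-- The bilinear product on `kM` (unlabeled forests). -/
noncomputable def mulM (k : Type) [Semiring k] (f g : (List UTree) →₀ k) : (List UTree) →₀ k :=
  f.sum fun X a => g.sum fun Y b =>
    if foliageU X = squashU Y then Finsupp.single (bulletU X Y) (a * b) else 0

/-- The concatenation product on `kM`. -/
noncomputable def mulCat (k : Type) [Semiring k] (f g : (List UTree) →₀ k) : (List UTree) →₀ k :=
  f.sum fun X a => g.sum fun Y b => Finsupp.single (X ++ Y) (a * b)

/-- The product on the free associative algebra `kℕ*` (concatenation of compositions). -/
noncomputable def mulComp (k : Type) [Semiring k] (f g : (List ℕ) →₀ k) : (List ℕ) →₀ k :=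
  f.sum fun u a => g.sum fun v b => Finsupp.single (u ++ v) (a * b)

/-- The linear map `E : kL → kM` erasing node labels. -/
noncomputable def EL (k : Type) [Semiring k] : ((List LTree) →₀ k) →ₗ[k] ((List UTree) →₀ k) :=
  Finsupp.lmapDomain k k eraseF

/-- `π` on a single unlabeled tree: replace every node by the Lie bracket. -/
noncomputable def piT (k : Type) [Ring k] : UTree → (List ℕ) →₀ k
  | .leaf x => Finsupp.single [x] 1
  | .node t1 t2 => mulComp k (piT k t1) (piT k t2) - mulComp k (piT k t2) (piT k t1)

/-- `π` on an unlabeled forest: the concatenation product of the images of its parts. -/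
noncomputable def piF (k : Type) [Ring k] (X : List UTree) : (List ℕ) →₀ k :=
  (X.map (piT k)).foldr (mulComp k) (Finsupp.single [] 1)

/-- The Pólya action of a permutation of `Fin j` on a list: the entry in position
`i` of the result is the entry in position `σ⁻¹ i` of the input. -/
def permuteL {α : Type} [Inhabited α] {j : ℕ} (σ : Equiv.Perm (Fin j)) (X : List α) :
    List α :=
  List.ofFn fun i => X.getD ((σ⁻¹ i : Fin j) : ℕ) default
/-! ## The quiver Q, its paths, and the map ι -/

/-- The partition obtained by splitting one part `a+b` into parts `a` and `b`. -/
def applyStep (a b : ℕ) (p : Multiset ℕ) : Multiset ℕ := a ::ₘ b ::ₘ p.erase (a + b)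

/-- The vertex reached from `p` after performing the given splitting steps. -/
def sourceAfter (p : Multiset ℕ) (steps : List (ℕ × ℕ)) : Multiset ℕ :=
  steps.foldl (fun q s => applyStep s.1 s.2 q) p

/-- A path in the quiver `Q`, recorded by its destination vertex (a partition,
i.e. a multiset of parts) together with the list of branch symbols `[aᵢ|bᵢ]`
read from the destination towards the source. -/
structure QPath where
  dest : Multiset ℕ
  steps : List (ℕ × ℕ)
  deriving DecidableEq

/-- Each step is applicable in turn. -/
def SeqOK : Multiset ℕ → List (ℕ × ℕ) → Prop
  | _, [] => True
  | p, s :: rest => s.1 + s.2 ∈ p ∧ SeqOK (applyStep s.1 s.2 p) rest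

/-- A valid path of `Q`: positive parts, each step `[a|b]` has `0 < a < b`, and the
steps apply in sequence. -/
def QPath.Valid (P : QPath) : Prop :=
  (∀ x ∈ P.dest, 0 < x) ∧ (∀ s ∈ P.steps, 0 < s.1 ∧ s.1 < s.2) ∧ SeqOK P.dest P.steps

/-- The source vertex of a path. -/
def QPath.source (P : QPath) : Multiset ℕ := sourceAfter P.dest P.steps

/-- The canonical length-one forest attached to the edge with destination `q`
splitting a part `a + b` into `a` and `b`. -/
noncomputable def edgeForest (a b : ℕ) (q : Multiset ℕ) : List LTree :=
  LTree.node 1 (LTree.leaf a) (LTree.leaf b) :: leavesOf (q.erase (a + b)).toList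

/-- `ι` on the path with destination `p` and branch symbols `steps`:
the product (in `kℒ`) of the orbit sums of the edge forests, with the edge nearest
the destination leftmost, times the orbit sum of the source vertex. -/
noncomputable def iotaSteps (k : Type) [Semiring k] :
    Multiset ℕ → List (ℕ × ℕ) → ((List LTree) →₀ k)
  | p, [] => pol k (leavesOf p.toList)
  | p, s :: rest =>
      mulL k (pol k (edgeForest s.1 s.2 p)) (iotaSteps k (applyStep s.1 s.2 p) rest)

/-- `ι` of a single path. -/
noncomputable def iotaP (k : Type) [Semiring k] (P : QPath) : (List LTree) →₀ k :=
  iotaSteps k P.dest P.steps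

/-- The linear extension `ι : kQ → kℒ`. -/
noncomputable def iotaLinM (k : Type) [Semiring k] : (QPath →₀ k) →ₗ[k] ((List LTree) →₀ k) :=
  (Finsupp.lift ((List LTree) →₀ k) k QPath) (iotaP k)

/-! ## The branch monoid and its actions -/

/-- All ways to replace one leaf of value `a+b` in a tree by a node labeled `lab`
with leaves `a` and `b`. -/
def branchActTree (a b lab : ℕ) : LTree → List LTree
  | .leaf x =>
      if x = a + b then [LTree.node lab (LTree.leaf a) (LTree.leaf b)] else []
  | .node i t1 t2 =>
      (branchActTree a b lab t1).map (fun u => LTree.node i u t2) ++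
      (branchActTree a b lab t2).map (fun u => LTree.node i t1 u)

/-- All ways to replace one leaf of value `a+b` in a forest by a node labeled `lab`. -/
def branchWays (a b lab : ℕ) : List LTree → List (List LTree)
  | [] => []
  | t :: rest =>
      (branchActTree a b lab t).map (· :: rest) ++
      (branchWays a b lab rest).map (t :: ·)

/-- The action of the branch symbol `[a|b]` on `kL`. -/
noncomputable def actL1 (k : Type) [Semiring k] (s : ℕ × ℕ) (x : (List LTree) →₀ k) :
    (List LTree) →₀ k :=
  x.sum fun X a =>
    a • ((branchWays s.1 s.2 (forestLen X + 1) X).map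
      (fun Y => Finsupp.single Y (1 : k))).sum

/-- The action of a word of the branch monoid `ℬ*` on `kL`. -/
noncomputable def actLW (k : Type) [Semiring k] (w : List (ℕ × ℕ)) (x : (List LTree) →₀ k) :
    (List LTree) →₀ k :=
  w.foldl (fun y s => actL1 k s y) x

/-- The action of the branch symbol `[a|b]` on `kQ`: prepend an edge at the source
if the source has a part `a + b`, and `0` otherwise. -/
noncomputable def actQ1 (k : Type) [Semiring k] (s : ℕ × ℕ) (x : QPath →₀ k) : QPath →₀ k :=
  x.sum fun P a =>
    if s.1 + s.2 ∈ P.source then Finsupp.single ⟨P.dest, P.steps ++ [s]⟩ a else 0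

/-- The action of a word of `ℬ*` on `kQ`. -/
noncomputable def actQW (k : Type) [Semiring k] (w : List (ℕ × ℕ)) (x : QPath →₀ k) :
    QPath →₀ k :=
  w.foldl (fun y s => actQ1 k s y) x

/-- The path `𝔭(X)` associated to an (aligned) labeled forest `X`: the destination is
the partition of the squash of `X`, and the `i`-th branch symbol records the values of
the two subtrees of the node labeled `i`. -/
noncomputable def pPath (X : List LTree) : QPath :=
  ⟨(squash X : Multiset ℕ),
    (List.range (forestLen X)).map fun i => (forestFindLab (i + 1) X).getD (0, 0)⟩
/-! ## The equivalence ∼ on labeled forests -/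

/-- The subtree of a forest at a position (part index, path in the part). -/
def forestSubtreeAt (X : List LTree) (q : ℕ × List Bool) : Option LTree :=
  if h : q.1 < X.length then (X.get ⟨q.1, h⟩).subtreeAt q.2 else none

/-- Replace the subtree at a position of a forest. -/
def forestReplaceAt (X : List LTree) (q : ℕ × List Bool) (u : LTree) : List LTree :=
  X.set q.1 ((X.getD q.1 default).replaceAt q.2 u)

/-- The label of the parent node of the position `q`, if it exists. -/
def parentLabel (X : List LTree) (q : ℕ × List Bool) : Option ℕ :=
  if q.2 = [] then none
  else (forestSubtreeAt X (q.1, q.2.dropLast)).bind LTree.rootLabel?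

/-- Two positions address disjoint subtrees. -/
def PosDisjoint (q r : ℕ × List Bool) : Prop :=
  q.1 ≠ r.1 ∨ (q.1 = r.1 ∧ ¬ q.2 <+: r.2 ∧ ¬ r.2 <+: q.2)

/-- Move (1): exchange two disjoint non-leaf subtrees `U`, `V` of equal value such that
the labels of the parents of `U` and `V` (where these exist) are smaller than the root
labels of `U` and `V`. -/
def Move1 (X Y : List LTree) : Prop :=
  ∃ (q r : ℕ × List Bool) (U V : LTree),
    PosDisjoint q r ∧
    forestSubtreeAt X q = some U ∧ forestSubtreeAt X r = some V ∧
    U.rootLabel?.isSome ∧ V.rootLabel?.isSome ∧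
    U.value = V.value ∧
    (∀ m, (parentLabel X q = some m ∨ parentLabel X r = some m) →
      ∀ j, (U.rootLabel? = some j ∨ V.rootLabel? = some j) → m < j) ∧
    Y = forestReplaceAt (forestReplaceAt X q V) r U

/-- Exchange the entries in positions `i` and `j` of a list. -/
def swapEntries (X : List LTree) (i j : ℕ) : List LTree :=
  (X.set i (X.getD j default)).set j (X.getD i default)

/-- Move (2): exchange two parts of a forest. -/
def Move2 (X Y : List LTree) : Prop :=
  ∃ i j, i < j ∧ j < X.length ∧ Y = swapEntries X i j

/-- The equivalence relation `∼` generated by the two kinds of moves. -/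
def SimRel : List LTree → List LTree → Prop :=
  Relation.ReflTransGen (fun A B => Move1 A B ∨ Move2 A B)

/-! ## The labeling map F -/

/-- Preorder labeling of an unlabeled tree, starting after label `s`; returns the
labeled tree and the last label used. -/
def labelTreeAux : ℕ → UTree → LTree × ℕ
  | s, .leaf x => (LTree.leaf x, s)
  | s, .node t1 t2 =>
    let p1 := labelTreeAux (s + 1) t1
    let p2 := labelTreeAux p1.2 t2
    (LTree.node (s + 1) p1.1 p2.1, p2.2)

def labelFAux : ℕ → List UTree → List LTree
  | _, [] => []
  | s, t :: r =>
    let p := labelTreeAux s t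
    p.1 :: labelFAux p.2 r

/-- The labeled forest `F(X)`: label the nodes of each part in prefix (preorder)
order, the nodes of each part receiving smaller labels than those of later parts. -/
def labelF (X : List UTree) : List LTree := labelFAux 0 X

/-! ## Compositions from subsets, and alleys -/

/-- The composition of `n` attached to a subset `J ⊆ {1, …, n−1}`: the list of
successive differences of `{0, n} ∪ (S ∖ J)`. -/
def phi (n : ℕ) (J : Finset ℕ) : List ℕ :=
  let ts := ((Finset.Icc 1 (n - 1)) \ J).sort (· ≤ ·)
  List.zipWith (fun a b => b - a) (0 :: ts) (ts ++ [n])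

/-- The start of the maximal block of consecutive points containing `i` linked by
the transpositions in `J` (the transposition `s` links `s` and `s+1`). -/
def bStart (J : Finset ℕ) : ℕ → ℕ
  | 0 => 0
  | 1 => 1
  | i + 2 => if (i + 1) ∈ J then bStart J (i + 1) else i + 2

/-- The end of the maximal block of consecutive points of `{1, …, n}` containing `i`
linked by the transpositions in `J`. -/
def bEnd (J : Finset ℕ) (n : ℕ) (i : ℕ) : ℕ :=
  if h : i < n ∧ i ∈ J then bEnd J n (i + 1) else i
termination_by n - i
decreasing_by
  have := h.1
  omega

/-- The longest element `w_J` of the parabolic subgroup `W_J ≤ Sₙ`, described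
explicitly as the permutation of `{1, …, n}` reversing each maximal block of
consecutive points linked by the transpositions in `J`. -/
def wJpt (n : ℕ) (J : Finset ℕ) (i : ℕ) : ℕ := bStart J i + bEnd J n i - i

/-- The permutation `ω = w_J ⬝ w_{J ∪ {t}}` (as a right action on points). -/
def omegaPt (n : ℕ) (J : Finset ℕ) (t : ℕ) (i : ℕ) : ℕ :=
  wJpt n (insert t J) (wJpt n J i)

/-- The conjugate `s^ω` of the Coxeter generator `s` by `ω = w_J w_{J∪{t}}`:
the generator whose transposition exchanges the images of `s` and `s+1`. -/
def conjGen (n : ℕ) (J : Finset ℕ) (t : ℕ) (s : ℕ) : ℕ :=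
  min (omegaPt n J t s) (omegaPt n J t (s + 1))

/-- An alley `(J; s₁, …, s_l)`. -/
structure Alley where
  J : Finset ℕ
  s : List ℕ
  deriving DecidableEq

/-- A valid alley for `Sₙ`: `J ⊆ S = {1, …, n−1}` and `s₁, …, s_l` are distinct
elements of `J`. -/
def IsAlley (n : ℕ) (a : Alley) : Prop :=
  a.J ⊆ Finset.Icc 1 (n - 1) ∧ a.s.Nodup ∧ ∀ x ∈ a.s, x ∈ a.J

/-- The action of the Coxeter generator `t` on an alley:
`(J; s₁, …, s_l).t = (J^ω; s₁^ω, …, s_l^ω)` where `ω = w_J w_{J∪{t}}`. -/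
def actAlley (n : ℕ) (t : ℕ) (a : Alley) : Alley :=
  ⟨a.J.image (conjGen n a.J t), a.s.map (conjGen n a.J t)⟩

/-- The action of a word of the free monoid `S*` on alleys. -/
def actWordA (n : ℕ) (a : Alley) (w : List ℕ) : Alley :=
  w.foldl (fun b t => actAlley n t b) a

/-- The defining property of the forest `φ(a)` attached to an alley `a = (J; s₁,…,s_l)`:
it is a labeled forest of length `l` admitting a factorization `X₁ • ⋯ • X_l` into
length-one forests with `s(Xᵢ) = φ(J ∖ {s₁,…,s_{i−1}})` and
`f(Xᵢ) = φ(J ∖ {s₁,…,sᵢ})`; for `l = 0` it is the forest of leaves `φ(J)`. -/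
def AlleySpec (n : ℕ) (a : Alley) (X : List LTree) : Prop :=
  IsLForest X ∧ forestLen X = a.s.length ∧
  ∃ F : List (List LTree), F.length = a.s.length ∧
    (∀ A ∈ F, IsLForest A ∧ forestLen A = 1) ∧
    (∀ (i : ℕ) (h : i < F.length),
      squash (F.get ⟨i, h⟩) = phi n (a.J \ (a.s.take i).toFinset) ∧
      forestFoliage (F.get ⟨i, h⟩) = phi n (a.J \ (a.s.take (i + 1)).toFinset)) ∧
    X = F.foldr bullet (leavesOf (phi n (a.J \ a.s.toFinset)))
/-! ## The descent algebra of the symmetric group -/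

/-- `w ∈ X_J`: every descent of `w` (viewing `w` as a permutation of `{1, …, n}`
via `Fin n`) occurs at a position belonging to `J`. -/
def DescAllowed (n : ℕ) (J : Finset ℕ) (w : Equiv.Perm (Fin n)) : Prop :=
  ∀ i j : Fin n, (i : ℕ) + 1 = (j : ℕ) → w j < w i → ((i : ℕ) + 1) ∈ J

open Classical in
/-- The element `x_J = ∑_{w ∈ X_J} w` of the group algebra of `Sₙ`. -/
noncomputable def xJelt (k : Type) [Semiring k] (n : ℕ) (J : Finset ℕ) :
    MonoidAlgebra k (Equiv.Perm (Fin n)) :=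
  ∑ w : Equiv.Perm (Fin n),
    if DescAllowed n J w then MonoidAlgebra.single w 1 else 0

/-- The descent algebra `Σ(Sₙ)` as a submodule (by Solomon's theorem, a subalgebra)
of the group algebra: the span of the `x_J`, `J ⊆ S`. -/
noncomputable def descentSpan (k : Type) [Semiring k] (n : ℕ) :
    Submodule k (MonoidAlgebra k (Equiv.Perm (Fin n))) :=
  Submodule.span k {x | ∃ J ⊆ Finset.Icc 1 (n - 1), x = xJelt k n J}

/-! ## Spans -/

/-- `kℒₙ`: the span of Pólya orbit sums of labeled forests of value `n`. -/
noncomputable def LspanN (k : Type) [Semiring k] (n : ℕ) :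
    Submodule k ((List LTree) →₀ k) :=
  Submodule.span k {y | ∃ X, IsLForest X ∧ forestValue X = n ∧ y = pol k X}

/-- `kℒ`: the span of Pólya orbit sums of labeled forests. -/
noncomputable def LspanAll (k : Type) [Semiring k] : Submodule k ((List LTree) →₀ k) :=
  Submodule.span k {y | ∃ X, IsLForest X ∧ y = pol k X}

/-- `kℳ`: the span of Pólya orbit sums of unlabeled forests. -/
noncomputable def MspanAll (k : Type) [Semiring k] : Submodule k ((List UTree) →₀ k) :=
  Submodule.span k {y | ∃ X, IsUForest X ∧ y = polU k X}

/-- `kℒ⁺`: the span of Pólya orbit sums of aligned labeled forests. -/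
noncomputable def LplusSpan (k : Type) [Semiring k] : Submodule k ((List LTree) →₀ k) :=
  Submodule.span k {y | ∃ X, IsLForest X ∧ ForestAligned X ∧ y = pol k X}

/-- `kM⁺`: the span of aligned unlabeled forests. -/
noncomputable def MplusSpan (k : Type) [Semiring k] : Submodule k ((List UTree) →₀ k) :=
  Submodule.span k {y | ∃ X, IsUForest X ∧ ForestAlignedU X ∧ y = Finsupp.single X (1 : k)}

/-- The identity element of `kLₙ`: the sum of all compositions of `n`. -/
noncomputable def unitL (k : Type) [Semiring k] (n : ℕ) : (List LTree) →₀ k :=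
  ∑ c : Composition n, Finsupp.single (leavesOf c.blocks) 1

/-- `kQₙ`: the span of the valid paths of the quiver `Qₙ` (partitions of `n`). -/
noncomputable def QspanN (k : Type) [Semiring k] (n : ℕ) : Submodule k (QPath →₀ k) :=
  Submodule.span k
    {y | ∃ P : QPath, P.Valid ∧ P.dest.sum = n ∧ y = Finsupp.single P 1}

/-- The path-algebra product on `kQ`: the concatenation "`P` then `F`" when the
destination of `P` is the source of `F`, and `0` otherwise. -/
noncomputable def mulQ (k : Type) [Semiring k] (f g : QPath →₀ k) : QPath →₀ k :=
  f.sum fun P a => g.sum fun F b =>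
    if F.source = P.dest then Finsupp.single ⟨F.dest, F.steps ++ P.steps⟩ (a * b) else 0

/-! ## The ideals 𝒩 and 𝒥 -/

/-- The generators of the ideal `𝒩`: `(U,V) + (V,U)`. -/
def NGens (k : Type) [Semiring k] : Set ((List UTree) →₀ k) :=
  {g | ∃ U V : UTree, U.leavesPos ∧ V.leavesPos ∧
    g = Finsupp.single [UTree.node U V] 1 + Finsupp.single [UTree.node V U] 1}

/-- The generators of the ideal `𝒥`: the Jacobi sums
`(X,(Y,Z)) + (Y,(Z,X)) + (Z,(X,Y))`. -/
def JGens (k : Type) [Semiring k] : Set ((List UTree) →₀ k) :=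
  {g | ∃ X Y Z : UTree, X.leavesPos ∧ Y.leavesPos ∧ Z.leavesPos ∧
    g = Finsupp.single [UTree.node X (UTree.node Y Z)] 1 +
        Finsupp.single [UTree.node Y (UTree.node Z X)] 1 +
        Finsupp.single [UTree.node Z (UTree.node X Y)] 1}

/-- The two-sided ideal `𝒩 + 𝒥` of `kM` with respect to concatenation. -/
noncomputable def NJideal (k : Type) [Semiring k] : Submodule k ((List UTree) →₀ k) :=
  Submodule.span k {x | ∃ (A B : List UTree) (g : (List UTree) →₀ k),
    (g ∈ NGens k ∨ g ∈ JGens k) ∧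
    x = mulCat k (Finsupp.single A (1 : k)) (mulCat k g (Finsupp.single B 1))}

/-! ## Branch relations -/

/-- The two-term branch relation `[a|b][c|d] − [c|d][a|b]`. -/
noncomputable def Rel1 (k : Type) [Ring k] (a b c d : ℕ) : (List (ℕ × ℕ)) →₀ k :=
  Finsupp.single [(a, b), (c, d)] 1 - Finsupp.single [(c, d), (a, b)] 1

/-- The three-term branch relation
`[a|b][c|d][x|y] + [x|y][a|b][c|d] − [a|b][x|y][c|d] − [c|d][x|y][a|b]`. -/
noncomputable def Rel2 (k : Type) [Ring k] (a b c d x y : ℕ) : (List (ℕ × ℕ)) →₀ k :=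
  Finsupp.single [(a, b), (c, d), (x, y)] 1 + Finsupp.single [(x, y), (a, b), (c, d)] 1
  - Finsupp.single [(a, b), (x, y), (c, d)] 1 - Finsupp.single [(c, d), (x, y), (a, b)] 1

/-- The side condition on `a, b, c, d`: positive, `a < b`, `c < d`,
`a+b ∉ {c,d}` and `c+d ∉ {a,b}`. -/
def Cond1 (a b c d : ℕ) : Prop :=
  0 < a ∧ a < b ∧ 0 < c ∧ c < d ∧ a + b ≠ c ∧ a + b ≠ d ∧ c + d ≠ a ∧ c + d ≠ b

/-- The set `ℛ ⊆ kℬ*` of branch relations. -/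
noncomputable def BranchRels (k : Type) [Ring k] : Set ((List (ℕ × ℕ)) →₀ k) :=
  {r | ∃ a b c d, Cond1 a b c d ∧ r = Rel1 k a b c d} ∪
  {r | ∃ a b c d x y, Cond1 a b c d ∧ 0 < x ∧ x < y ∧
    ((a + b = c + d ∧ (a + b = x ∨ a + b = y)) ∨
      ((x + y = a ∨ x + y = b) ∧ (x + y = c ∨ x + y = d))) ∧
    r = Rel2 k a b c d x y}
/-! ## Auxiliary lemmas for the proof of injectivity of ι -/

section IotaInjectivity

namespace LTree

lemma findLab_eq_none : ∀ {t : LTree} {i : ℕ}, i ∉ t.labels → t.findLab i = none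
  | .leaf _, _, _ => rfl
  | .node j t1 t2, i, h => by
    simp only [labels, List.mem_cons, List.mem_append, not_or] at h
    simp only [findLab]
    rw [if_neg (fun hj => h.1 hj.symm), findLab_eq_none h.2.1, findLab_eq_none h.2.2]
    rfl

@[simp] lemma value_shift (m : ℕ) : ∀ t : LTree, (t.shift m).value = t.value
  | .leaf _ => rfl
  | .node i t1 t2 => by simp [shift, value, value_shift m t1, value_shift m t2]

@[simp] lemma numNodes_shift (m : ℕ) : ∀ t : LTree, (t.shift m).numNodes = t.numNodes
  | .leaf _ => rfl
  | .node i t1 t2 => by simp [shift, numNodes, numNodes_shift m t1, numNodes_shift m t2]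

lemma findLab_shift (m : ℕ) : ∀ (t : LTree) (i : ℕ), (t.shift m).findLab (i + m) = t.findLab i
  | .leaf _, _ => rfl
  | .node j t1 t2, i => by
    simp only [shift, findLab, value_shift, findLab_shift m t1 i, findLab_shift m t2 i]
    by_cases h : j = i
    · simp [h]
    · rw [if_neg (by omega), if_neg h]

end LTree

lemma forestFindLab_append (i : ℕ) : ∀ u v : List LTree,
    forestFindLab i (u ++ v) = (forestFindLab i u).orElse (fun _ => forestFindLab i v)
  | [], v => rfl
  | t :: u, v => by
    rw [List.cons_append]
    show (t.findLab i).orElse (fun _ => forestFindLab i (u ++ v)) =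
      ((t.findLab i).orElse fun _ => forestFindLab i u).orElse fun _ => forestFindLab i v
    rw [forestFindLab_append i u v]
    cases t.findLab i <;> rfl

lemma forestFindLab_eq_none : ∀ {X : List LTree} {i : ℕ},
    i ∉ forestLabels X → forestFindLab i X = none
  | [], _, _ => rfl
  | t :: X, i, h => by
    simp only [forestLabels, List.flatMap_cons, List.mem_append, not_or] at h
    have h2 : i ∉ forestLabels X := h.2
    simp only [forestFindLab, LTree.findLab_eq_none h.1, forestFindLab_eq_none h2]
    rfl

lemma forestFindLab_shiftMap (m i : ℕ) : ∀ Y : List LTree,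
    forestFindLab (i + m) (Y.map (LTree.shift m)) = forestFindLab i Y
  | [] => rfl
  | t :: Y => by
    simp only [List.map_cons, forestFindLab, LTree.findLab_shift m t i,
      forestFindLab_shiftMap m i Y]

@[simp] lemma squash_cons (t : LTree) (X : List LTree) :
    squash (t :: X) = t.value :: squash X := rfl

@[simp] lemma forestLen_cons (t : LTree) (X : List LTree) :
    forestLen (t :: X) = t.numNodes + forestLen X := by simp [forestLen]

@[simp] lemma forestLabels_cons (t : LTree) (X : List LTree) :
    forestLabels (t :: X) = t.labels ++ forestLabels X := by simp [forestLabels]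

@[simp] lemma forestFoliage_cons (t : LTree) (X : List LTree) :
    forestFoliage (t :: X) = t.foliage ++ forestFoliage X := by simp [forestFoliage]

@[simp] lemma squash_leavesOf (l : List ℕ) : squash (leavesOf l) = l := by
  induction l <;> simp_all [squash, leavesOf, LTree.value]

@[simp] lemma forestLen_leavesOf (l : List ℕ) : forestLen (leavesOf l) = 0 := by
  induction l <;> simp_all [forestLen, leavesOf, LTree.numNodes]

@[simp] lemma forestLabels_leavesOf (l : List ℕ) : forestLabels (leavesOf l) = [] := by
  induction l <;> simp_all [forestLabels, leavesOf, LTree.labels]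

@[simp] lemma forestFoliage_leavesOf (l : List ℕ) : forestFoliage (leavesOf l) = l := by
  induction l <;> simp_all [forestFoliage, leavesOf, LTree.foliage]

/-- The key per-tree grafting lemma. -/
theorem LTree.graft_spec : ∀ (t : LTree) (ys zs : List LTree),
    ys.map LTree.value = t.foliage →
    (t.graft (ys ++ zs)).2 = zs ∧
    (t.graft (ys ++ zs)).1.value = t.value ∧
    (t.graft (ys ++ zs)).1.numNodes = t.numNodes + (ys.map LTree.numNodes).sum ∧
    ((t.graft (ys ++ zs)).1.labels : Multiset ℕ)
      = (t.labels : Multiset ℕ) + (ys.flatMap LTree.labels : Multiset ℕ) ∧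
    (∀ i, i ∉ ys.flatMap LTree.labels → (t.graft (ys ++ zs)).1.findLab i = t.findLab i) ∧
    (∀ i, i ∉ t.labels → (t.graft (ys ++ zs)).1.findLab i = forestFindLab i ys) := by
  intro t
  induction t with
  | leaf x =>
    intro ys zs h
    obtain ⟨y, rfl, hy⟩ : ∃ y, ys = [y] ∧ y.value = x := by
      rcases ys with _ | ⟨y, _ | ⟨z, l⟩⟩ <;> simp_all [LTree.foliage]
    refine ⟨rfl, ?_, ?_, ?_, ?_, ?_⟩
    · simpa [LTree.graft, LTree.value] using hy
    · simp [LTree.graft, LTree.numNodes]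
    · simp [LTree.graft, LTree.labels]
    · intro i hi
      simp only [List.flatMap_cons, List.flatMap_nil, List.append_nil] at hi
      simp [LTree.graft, LTree.findLab, LTree.findLab_eq_none hi]
    · intro i _
      show y.findLab i = forestFindLab i [y]
      simp only [forestFindLab]
      cases y.findLab i <;> rfl
  | node j t1 t2 ih1 ih2 =>
    intro ys zs h
    simp only [LTree.foliage] at h
    obtain ⟨ys1, ys2, rfl, h1, h2⟩ := List.map_eq_append_iff.mp h
    rw [List.append_assoc]
    obtain ⟨ea, eb, ec, ed, ee, ef⟩ := ih1 ys1 (ys2 ++ zs) h1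
    obtain ⟨fa, fb, fc, fd, fe, ff⟩ := ih2 ys2 zs h2
    simp only [LTree.graft, ea]
    refine ⟨fa, ?_, ?_, ?_, ?_, ?_⟩
    · simp [LTree.value, eb, fb]
    · simp only [LTree.numNodes, ec, fc, List.map_append, List.sum_append]
      omega
    · simp only [LTree.labels, List.flatMap_append, ← Multiset.cons_coe, ← Multiset.coe_add,
        ed, fd, ← Multiset.singleton_add]
      abel
    · intro i hi
      simp only [List.flatMap_append, List.mem_append, not_or] at hi
      simp only [LTree.findLab, eb, fb, ee i hi.1, fe i hi.2]
    · intro i hi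
      simp only [LTree.labels, List.mem_cons, List.mem_append, not_or] at hi
      rw [forestFindLab_append]
      simp only [LTree.findLab, ef i hi.2.1, ff i hi.2.2]
      rw [if_neg (fun hj => hi.1 hj.symm)]

/-- The forest-level grafting lemma. -/
theorem graftForest_spec : ∀ (X ys : List LTree),
    ys.map LTree.value = forestFoliage X →
    squash (graftForest X ys) = squash X ∧
    forestLen (graftForest X ys) = forestLen X + (ys.map LTree.numNodes).sum ∧
    (forestLabels (graftForest X ys) : Multiset ℕ)
      = (forestLabels X : Multiset ℕ) + (ys.flatMap LTree.labels : Multiset ℕ) ∧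
    (∀ i, i ∉ ys.flatMap LTree.labels →
      forestFindLab i (graftForest X ys) = forestFindLab i X) ∧
    (∀ i, i ∉ forestLabels X → forestFindLab i (graftForest X ys) = forestFindLab i ys)
  | [], ys, h => by
    have : ys = [] := by simpa [forestFoliage] using h
    subst this
    simp [graftForest, squash, forestLen, forestLabels, forestFoliage]
  | t :: X, ys, h => by
    rw [forestFoliage_cons] at h
    obtain ⟨ys1, ys2, rfl, h1, h2⟩ := List.map_eq_append_iff.mp h
    obtain ⟨ea, eb, ec, ed, ee, ef⟩ := LTree.graft_spec t ys1 ys2 h1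
    obtain ⟨fa, fb, fc, fd, fe⟩ := graftForest_spec X ys2 h2
    simp only [graftForest, ea]
    refine ⟨?_, ?_, ?_, ?_, ?_⟩
    · simp [eb, fa]
    · simp only [forestLen_cons, ec, fb, List.map_append, List.sum_append]
      omega
    · simp only [forestLabels_cons, List.flatMap_append, ← Multiset.coe_add, ed, fc]
      abel
    · intro i hi
      simp only [List.flatMap_append, List.mem_append, not_or] at hi
      simp only [forestFindLab, ee i hi.1, fd i hi.2]
    · intro i hi
      simp only [forestLabels_cons, List.mem_append, not_or] at hi
      rw [forestFindLab_append]
      simp only [forestFindLab, ef i hi.1, fe i hi.2]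

lemma forestFindLab_one_of (a b : ℕ) : ∀ (X : List LTree),
    (∀ t ∈ X, t = LTree.node 1 (LTree.leaf a) (LTree.leaf b) ∨ ∃ c, t = LTree.leaf c) →
    (LTree.node 1 (LTree.leaf a) (LTree.leaf b)) ∈ X →
    forestFindLab 1 X = some (a, b)
  | [], _, hm => by simp at hm
  | t :: X, hall, hm => by
    rcases hall t List.mem_cons_self with rfl | ⟨c, rfl⟩
    · simp [forestFindLab, LTree.findLab, LTree.value]
    · have hmem : LTree.node 1 (LTree.leaf a) (LTree.leaf b) ∈ X := by
        rcases List.mem_cons.mp hm with h | h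
        · exact absurd h (by simp)
        · exact h
      have := forestFindLab_one_of a b X (fun u hu => hall u (List.mem_cons_of_mem _ hu)) hmem
      simp only [forestFindLab, LTree.findLab]
      exact this

/-- The invariant satisfied by every forest in the support of `iotaSteps`. -/
def InvP (p : Multiset ℕ) (steps : List (ℕ × ℕ)) (Z : List LTree) : Prop :=
  (squash Z : Multiset ℕ) = p ∧ forestLen Z = steps.length ∧
  (forestLabels Z : Multiset ℕ) = (List.range' 1 (forestLen Z) : Multiset ℕ) ∧
  ∀ (i : ℕ) (h : i < steps.length), forestFindLab (i + 1) Z = some steps[i]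

lemma pol_apply (k : Type) [Semiring k] (W Z : List LTree) :
    pol k W Z = if Z ∈ W.permutations.toFinset then 1 else 0 := by
  rw [pol, Finsupp.finset_sum_apply]
  rw [Finset.sum_congr rfl (fun Y _ => Finsupp.single_apply (a := Y) (a' := Z) (b := (1 : k)))]
  exact Finset.sum_ite_eq' W.permutations.toFinset Z (fun _ => (1 : k))

lemma mulL_support_subset (k : Type) [Semiring k] (f g : (List LTree) →₀ k) {Z : List LTree}
    (hZ : Z ∈ (mulL k f g).support) :
    ∃ X ∈ f.support, ∃ Y ∈ g.support, forestFoliage X = squash Y ∧ Z = bullet X Y := by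
  rw [mulL] at hZ
  have h1 := Finsupp.support_sum hZ
  obtain ⟨X, hX, h2⟩ := Finset.mem_biUnion.mp h1
  have h3 := Finsupp.support_sum h2
  obtain ⟨Y, hY, h4⟩ := Finset.mem_biUnion.mp h3
  refine ⟨X, hX, Y, hY, ?_⟩
  by_cases hc : forestFoliage X = squash Y
  · rw [if_pos hc] at h4
    have := Finsupp.support_single_subset h4
    exact ⟨hc, (Finset.mem_singleton.mp this)⟩
  · rw [if_neg hc] at h4
    simp at h4

lemma edgeForest_shape (a b : ℕ) (q : Multiset ℕ) :
    ∀ t ∈ edgeForest a b q,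
      t = LTree.node 1 (LTree.leaf a) (LTree.leaf b) ∨ ∃ c, t = LTree.leaf c := by
  intro t ht
  rcases List.mem_cons.mp ht with h | h
  · exact Or.inl h
  · obtain ⟨c, _, rfl⟩ := List.mem_map.mp h
    exact Or.inr ⟨c, rfl⟩

lemma support_iotaSteps (k : Type) [Semiring k] :
    ∀ (steps : List (ℕ × ℕ)) (p : Multiset ℕ), SeqOK p steps →
    ∀ Z ∈ (iotaSteps k p steps).support, InvP p steps Z := by
  intro steps
  induction steps with
  | nil =>
    intro p _ Z hZ
    rw [iotaSteps] at hZ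
    have hmem : Z ∈ (leavesOf p.toList).permutations.toFinset := by
      by_contra hc
      have := pol_apply k (leavesOf p.toList) Z
      rw [if_neg hc] at this
      exact (Finsupp.mem_support_iff.mp hZ) this
    have hperm : List.Perm Z (leavesOf p.toList) :=
      List.mem_permutations.mp (List.mem_toFinset.mp hmem)
    have e1 : (squash Z : Multiset ℕ) = (squash (leavesOf p.toList) : Multiset ℕ) :=
      Multiset.coe_eq_coe.mpr (hperm.map LTree.value)
    have e2 : forestLen Z = forestLen (leavesOf p.toList) :=
      List.Perm.sum_eq (hperm.map LTree.numNodes)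
    have e3 : (forestLabels Z : Multiset ℕ)
        = (forestLabels (leavesOf p.toList) : Multiset ℕ) :=
      Multiset.coe_eq_coe.mpr (hperm.flatMap_right LTree.labels)
    refine ⟨?_, ?_, ?_, ?_⟩
    · rw [e1]; simp [Multiset.coe_toList]
    · rw [e2]; simp
    · rw [e3, e2]; simp
    · intro i hi
      simp at hi
  | cons s rest ih =>
    intro p hseq Z hZ
    obtain ⟨hmem, hseq'⟩ := hseq
    rw [iotaSteps] at hZ
    obtain ⟨X, hX, Y, hY, hmatch, rfl⟩ := mulL_support_subset k _ _ hZ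
    -- facts about X
    have hXperm : List.Perm X (edgeForest s.1 s.2 p) := by
      by_contra hc
      have := pol_apply k (edgeForest s.1 s.2 p) X
      rw [if_neg (fun hm => hc (List.mem_permutations.mp (List.mem_toFinset.mp hm)))] at this
      exact (Finsupp.mem_support_iff.mp hX) this
    obtain ⟨hYsq, hYlen, hYlab, hYfind⟩ := ih (applyStep s.1 s.2 p) hseq' Y hY
    have hXlen : forestLen X = 1 := by
      have e2 : forestLen X = forestLen (edgeForest s.1 s.2 p) :=
        List.Perm.sum_eq (hXperm.map LTree.numNodes)
      rw [e2, edgeForest]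
      simp [LTree.numNodes]
    have hXlabM : (forestLabels X : Multiset ℕ) = (([1] : List ℕ) : Multiset ℕ) := by
      have e3 : (forestLabels X : Multiset ℕ)
          = (forestLabels (edgeForest s.1 s.2 p) : Multiset ℕ) :=
        Multiset.coe_eq_coe.mpr (hXperm.flatMap_right LTree.labels)
      rw [e3, edgeForest]
      simp [LTree.labels]
    have hX1 : forestFindLab 1 X = some (s.1, s.2) := by
      apply forestFindLab_one_of
      · intro t ht
        exact edgeForest_shape s.1 s.2 p t (hXperm.mem_iff.mp ht)
      · exact hXperm.mem_iff.mpr List.mem_cons_self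
    -- the grafting
    set ys : List LTree := Y.map (LTree.shift (forestLen X)) with hys
    have hyval : ys.map LTree.value = forestFoliage X := by
      rw [hys, List.map_map, hmatch]
      simp [squash, Function.comp_def]
    obtain ⟨ga, gb, gc, gd, ge⟩ := graftForest_spec X ys hyval
    have hbul : bullet X Y = graftForest X ys := rfl
    -- labels of ys
    have hysflat : ys.flatMap LTree.labels = (Y.flatMap LTree.labels).map (· + 1) := by
      rw [hys, hXlen, List.flatMap_map, List.map_flatMap]
      congr 1
      funext t
      induction t with
      | leaf v => rfl
      | node i t1 t2 ih1 ih2 => simp [LTree.shift, LTree.labels, ih1, ih2]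
    have hYlab' : ((Y.flatMap LTree.labels : List ℕ) : Multiset ℕ)
        = (List.range' 1 rest.length : Multiset ℕ) := by
      rw [← hYlen]; exact hYlab
    have hyslabM : (ys.flatMap LTree.labels : Multiset ℕ)
        = (List.range' 2 rest.length : Multiset ℕ) := by
      rw [hysflat, ← Multiset.map_coe, hYlab', Multiset.map_coe]
      congr 1
      have : ((· + 1) : ℕ → ℕ) = (1 + ·) := by funext n; omega
      rw [this, List.map_add_range']
    have h1not : (1 : ℕ) ∉ ys.flatMap LTree.labels := by
      intro hmem1
      have : (1 : ℕ) ∈ (List.range' 2 rest.length : Multiset ℕ) := by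
        rw [← hyslabM]; exact Multiset.mem_coe.mpr hmem1
      rw [Multiset.mem_coe, List.mem_range'] at this
      omega
    have hlenZ : forestLen (bullet X Y) = rest.length + 1 := by
      rw [hbul, gb, hXlen]
      have : (ys.map LTree.numNodes).sum = forestLen Y := by
        rw [hys, List.map_map]
        simp [forestLen, Function.comp_def]
      rw [this, hYlen]; omega
    refine ⟨?_, ?_, ?_, ?_⟩
    · rw [hbul]
      rw [show (squash (graftForest X ys) : Multiset ℕ) = (squash X : Multiset ℕ) from
        congrArg _ ga]
      have e4 : (squash X : Multiset ℕ) = (squash (edgeForest s.1 s.2 p) : Multiset ℕ) :=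
        Multiset.coe_eq_coe.mpr (hXperm.map LTree.value)
      rw [e4]
      rw [show squash (edgeForest s.1 s.2 p)
          = (s.1 + s.2) :: (p.erase (s.1 + s.2)).toList by
        simp [edgeForest, LTree.value]]
      rw [← Multiset.cons_coe, Multiset.coe_toList]
      exact Multiset.cons_erase hmem
    · rw [hlenZ]; simp
    · rw [hlenZ, hbul, gc, hXlabM, hyslabM]
      rw [show List.range' 1 (rest.length + 1) = 1 :: List.range' 2 rest.length from
        List.range'_succ]
      rw [← Multiset.cons_coe, ← Multiset.singleton_add]
      rfl
    · intro i hi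
      rcases i with _ | i
      · rw [hbul, gd 1 h1not, hX1]
        rfl
      · have hi' : i < rest.length := by simpa using hi
        have hne : (i + 1 + 1 : ℕ) ∉ forestLabels X := by
          intro hmem2
          have : (i + 1 + 1 : ℕ) ∈ (([1] : List ℕ) : Multiset ℕ) := by
            rw [← hXlabM]; exact Multiset.mem_coe.mpr hmem2
          simp at this
        rw [hbul, ge (i + 1 + 1) hne]
        have := forestFindLab_shiftMap 1 (i + 1) Y
        rw [hys, hXlen]
        rw [this]
        rw [hYfind i hi']
        rfl

lemma pPath_eq_of_inv {p : Multiset ℕ} {steps : List (ℕ × ℕ)} {Z : List LTree}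
    (h : InvP p steps Z) : pPath Z = ⟨p, steps⟩ := by
  obtain ⟨h1, h2, h3, h4⟩ := h
  rw [pPath]
  congr 1
  rw [h2]
  apply List.ext_getElem (by simp)
  intro i hi1 hi2
  simp only [List.getElem_map, List.getElem_range]
  rw [h4 i (by simpa using hi2)]
  rfl

/-- Positivity: over `ℕ`, for every arrangement `u` of `p` there is a forest with
squash `u` carrying positive coefficient. -/
lemma iotaSteps_exists_pos :
    ∀ (steps : List (ℕ × ℕ)) (p : Multiset ℕ), SeqOK p steps →
    ∀ u : List ℕ, (u : Multiset ℕ) = p →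
    ∃ Z, squash Z = u ∧ 0 < iotaSteps ℕ p steps Z := by
  intro steps
  induction steps with
  | nil =>
    intro p _ u hu
    refine ⟨leavesOf u, by simp, ?_⟩
    rw [iotaSteps, pol_apply]
    have hperm : List.Perm (leavesOf u) (leavesOf p.toList) := by
      apply List.Perm.map
      rw [← Multiset.coe_eq_coe, hu, Multiset.coe_toList]
    rw [if_pos (List.mem_toFinset.mpr (List.mem_permutations.mpr hperm))]
    norm_num
  | cons s rest ih =>
    intro p hseq u hu
    obtain ⟨hmem, hseq'⟩ := hseq
    obtain ⟨a, b⟩ := s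
    simp only at hmem hseq' ⊢
    have hmemu : a + b ∈ u := by
      rw [← Multiset.mem_coe, hu]; exact hmem
    obtain ⟨A, B, rfl⟩ := List.append_of_mem hmemu
    have herase : p.erase (a + b) = ((A ++ B : List ℕ) : Multiset ℕ) := by
      rw [← hu, Multiset.coe_eq_coe.mpr (List.perm_middle (a := a + b) (l₁ := A) (l₂ := B)),
        ← Multiset.cons_coe, Multiset.erase_cons_head]
    have hv : ((A ++ a :: b :: B : List ℕ) : Multiset ℕ) = applyStep a b p := by
      rw [applyStep, herase]
      rw [Multiset.coe_eq_coe.mpr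
        ((List.perm_middle (a := a) (l₁ := A) (l₂ := b :: B)).trans
          ((List.perm_middle (a := b) (l₁ := A) (l₂ := B)).cons a))]
      rw [← Multiset.cons_coe, ← Multiset.cons_coe]
    obtain ⟨Y₀, hYsq, hYpos⟩ := ih (applyStep a b p) hseq' (A ++ a :: b :: B) hv
    set nd := LTree.node 1 (LTree.leaf a) (LTree.leaf b) with hnd
    set X₀ : List LTree := leavesOf A ++ nd :: leavesOf B with hX₀
    have hX₀perm : List.Perm X₀ (edgeForest a b p) := by
      rw [hX₀, edgeForest]
      refine (List.perm_middle).trans (List.Perm.cons nd ?_)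
      have h5 : List.Perm (A ++ B) (p.erase (a + b)).toList := by
        rw [← Multiset.coe_eq_coe, Multiset.coe_toList, herase]
      have h6 := h5.map LTree.leaf
      rw [List.map_append] at h6
      exact h6
    have hEX : pol ℕ (edgeForest a b p) X₀ = 1 := by
      rw [pol_apply, if_pos (List.mem_toFinset.mpr (List.mem_permutations.mpr hX₀perm))]
    have hfol : forestFoliage X₀ = squash Y₀ := by
      rw [hYsq, hX₀]
      show forestFoliage (leavesOf A ++ nd :: leavesOf B) = _
      rw [show forestFoliage (leavesOf A ++ nd :: leavesOf B)
          = forestFoliage (leavesOf A) ++ (nd.foliage ++ forestFoliage (leavesOf B)) by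
        simp [forestFoliage]]
      simp [hnd, LTree.foliage]
    set Z₀ := bullet X₀ Y₀ with hZ₀
    have hyval : (Y₀.map (LTree.shift (forestLen X₀))).map LTree.value = forestFoliage X₀ := by
      rw [List.map_map, hfol]
      simp [squash, Function.comp_def]
    obtain ⟨ga, _, _, _, _⟩ := graftForest_spec X₀ (Y₀.map (LTree.shift (forestLen X₀))) hyval
    have hsqZ : squash Z₀ = A ++ (a + b) :: B := by
      rw [hZ₀, show bullet X₀ Y₀ = graftForest X₀ (Y₀.map (LTree.shift (forestLen X₀))) from rfl,
        ga, hX₀]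
      show squash (leavesOf A ++ nd :: leavesOf B) = _
      rw [show squash (leavesOf A ++ nd :: leavesOf B)
          = squash (leavesOf A) ++ (nd.value :: squash (leavesOf B)) by simp [squash]]
      simp [hnd, LTree.value]
    refine ⟨Z₀, hsqZ, ?_⟩
    -- positivity of the coefficient
    rw [iotaSteps]
    set E := pol ℕ (edgeForest a b p) with hE
    set R := iotaSteps ℕ (applyStep a b p) rest with hR
    have hXmem : X₀ ∈ E.support := Finsupp.mem_support_iff.mpr (by rw [hEX]; norm_num)
    have hYmem : Y₀ ∈ R.support := Finsupp.mem_support_iff.mpr hYpos.ne'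
    rw [mulL]
    rw [Finsupp.sum_apply]
    rw [Finsupp.sum]
    have inner_le : ∀ X ∈ E.support, (0 : ℕ) ≤
        (Finsupp.sum R fun Y c =>
          if forestFoliage X = squash Y then Finsupp.single (bullet X Y) (E X * c) else 0) Z₀ :=
      fun _ _ => Nat.zero_le _
    have hterm : 0 < (Finsupp.sum R fun Y c =>
        if forestFoliage X₀ = squash Y then Finsupp.single (bullet X₀ Y) (E X₀ * c) else 0) Z₀ := by
      rw [Finsupp.sum_apply, Finsupp.sum]
      have h5 : 0 < (if forestFoliage X₀ = squash Y₀
          then Finsupp.single (bullet X₀ Y₀) (E X₀ * R Y₀) else 0) Z₀ := by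
        rw [if_pos hfol, hZ₀, Finsupp.single_eq_same, hEX, one_mul]
        exact hYpos
      calc 0 < _ := h5
        _ ≤ _ := Finset.single_le_sum (f := fun Y =>
            (if forestFoliage X₀ = squash Y
              then Finsupp.single (bullet X₀ Y) (E X₀ * R Y) else 0) Z₀)
            (fun _ _ => Nat.zero_le _) hYmem
    calc 0 < _ := hterm
      _ ≤ _ := Finset.single_le_sum (f := fun X =>
          (Finsupp.sum R fun Y c =>
            if forestFoliage X = squash Y then Finsupp.single (bullet X Y) (E X * c) else 0) Z₀)
          (fun _ _ => Nat.zero_le _) hXmem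

lemma pol_cast (k : Type) [Semiring k] (W : List LTree) :
    pol k W = Finsupp.mapRange (Nat.cast : ℕ → k) Nat.cast_zero (pol ℕ W) := by
  ext Z
  rw [Finsupp.mapRange_apply, pol_apply, pol_apply]
  split <;> simp

lemma mulL_cast (k : Type) [Semiring k] [CharZero k] (f g : (List LTree) →₀ ℕ) :
    mulL k (Finsupp.mapRange (Nat.cast : ℕ → k) Nat.cast_zero f)
        (Finsupp.mapRange (Nat.cast : ℕ → k) Nat.cast_zero g)
      = Finsupp.mapRange (Nat.cast : ℕ → k) Nat.cast_zero (mulL ℕ f g) := by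
  have hmr : ∀ (h : (List LTree) →₀ ℕ), Finsupp.mapRange (Nat.cast : ℕ → k) Nat.cast_zero h
      = Finsupp.mapRange.addMonoidHom (Nat.castAddMonoidHom k) h := fun _ => rfl
  have hsf : (Finsupp.mapRange (Nat.cast : ℕ → k) Nat.cast_zero f).support = f.support :=
    Finsupp.support_mapRange_of_injective Nat.cast_zero f Nat.cast_injective
  have hsg : (Finsupp.mapRange (Nat.cast : ℕ → k) Nat.cast_zero g).support = g.support :=
    Finsupp.support_mapRange_of_injective Nat.cast_zero g Nat.cast_injective
  rw [mulL, mulL]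
  simp only [Finsupp.sum, Finsupp.mapRange_apply]
  rw [hsf, hsg, hmr, map_sum]
  apply Finset.sum_congr rfl
  intro X _
  rw [map_sum]
  apply Finset.sum_congr rfl
  intro Y _
  by_cases hc : forestFoliage X = squash Y
  · rw [if_pos hc, if_pos hc, ← hmr, Finsupp.mapRange_single, Nat.cast_mul]
  · rw [if_neg hc, if_neg hc, map_zero]

lemma iotaSteps_cast (k : Type) [Semiring k] [CharZero k] :
    ∀ (steps : List (ℕ × ℕ)) (p : Multiset ℕ),
    iotaSteps k p steps
      = Finsupp.mapRange (Nat.cast : ℕ → k) Nat.cast_zero (iotaSteps ℕ p steps) := by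
  intro steps
  induction steps with
  | nil => intro p; rw [iotaSteps, iotaSteps, pol_cast]
  | cons s rest ih =>
    intro p
    rw [iotaSteps, iotaSteps, pol_cast, ih, mulL_cast]

lemma mapDomain_eq_single {α β M : Type} [AddCommMonoid M] (gm : α → β) (f : α →₀ M) (b : β)
    (h : ∀ a ∈ f.support, gm a = b) :
    Finsupp.mapDomain gm f = Finsupp.single b (f.sum fun _ m => m) := by
  rw [Finsupp.mapDomain]
  rw [Finsupp.sum_congr (g2 := fun _ m => Finsupp.single b m) (fun a ha => by rw [h a ha])]
  rw [Finsupp.sum, Finsupp.sum]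
  exact (map_sum (Finsupp.singleAddHom b) _ _).symm

lemma sum_mapRange_cast (k : Type) [Semiring k] (f : (List LTree) →₀ ℕ) :
    ((Finsupp.mapRange (Nat.cast : ℕ → k) Nat.cast_zero f).sum fun _ m => m)
      = ((f.sum fun _ m => m : ℕ) : k) := by
  rw [Finsupp.sum_mapRange_index (fun _ => rfl)]
  rw [Finsupp.sum, Finsupp.sum, Nat.cast_sum]

lemma mapDomain_iotaP (k : Type) [Semiring k] [CharZero k] (P : QPath) (hP : P.Valid) :
    ∃ N : ℕ, 0 < N ∧
      Finsupp.mapDomain pPath (iotaP k P) = Finsupp.single P ((N : k)) := by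
  obtain ⟨-, -, hseq⟩ := hP
  refine ⟨(iotaSteps ℕ P.dest P.steps).sum fun _ m => m, ?_, ?_⟩
  · obtain ⟨Z, -, hpos⟩ := iotaSteps_exists_pos P.steps P.dest hseq P.dest.toList
      (Multiset.coe_toList _)
    have hZ : Z ∈ (iotaSteps ℕ P.dest P.steps).support :=
      Finsupp.mem_support_iff.mpr hpos.ne'
    calc 0 < (iotaSteps ℕ P.dest P.steps) Z := hpos
      _ ≤ _ := Finset.single_le_sum (f := fun a => (iotaSteps ℕ P.dest P.steps) a)
          (fun _ _ => Nat.zero_le _) hZ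
  · have hsupp : ∀ Z ∈ (iotaP k P).support, pPath Z = P := by
      intro Z hZ
      have h := pPath_eq_of_inv (support_iotaSteps k P.steps P.dest hseq Z hZ)
      rw [h]
    rw [mapDomain_eq_single pPath (iotaP k P) P hsupp]
    congr 1
    show ((iotaSteps k P.dest P.steps).sum fun _ m => m) = _
    rw [iotaSteps_cast k P.steps P.dest, sum_mapRange_cast]

end IotaInjectivity

/-- **Corollary `IotaInjective`.** The linear anti-homomorphism `ι : kQ → kℒ`
is injective. -/
theorem iota_injective (k : Type) [Field k] [CharZero k]
    (x : QPath →₀ k) (hx : ∀ P ∈ x.support, P.Valid) (h0 : iotaLinM k x = 0) :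
    x = 0 := by
  choose N hNpos hNmap using fun P (hP : P ∈ x.support) => mapDomain_iotaP k P (hx P hP)
  have hmd : ∀ v : (List LTree) →₀ k,
      Finsupp.mapDomain pPath v = Finsupp.mapDomain.addMonoidHom pPath v := fun _ => rfl
  have h1 : Finsupp.mapDomain pPath (iotaLinM k x) = 0 := by
    rw [h0, Finsupp.mapDomain_zero]
  have h2 : iotaLinM k x = x.sum fun P a => a • iotaP k P := by
    rw [iotaLinM, Finsupp.lift_apply]
  rw [h2, Finsupp.sum, hmd, map_sum] at h1
  ext P₀
  by_cases hP₀ : P₀ ∈ x.support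
  swap
  · simpa using Finsupp.notMem_support_iff.mp hP₀
  have h6 : ∀ P (hP : P ∈ x.support),
      (Finsupp.mapDomain.addMonoidHom pPath ((x P) • iotaP k P)) P₀
        = if P = P₀ then x P * ((N P hP : ℕ) : k) else 0 := by
    intro P hP
    have he : Finsupp.mapDomain.addMonoidHom pPath ((x P) • iotaP k P)
        = Finsupp.single P (x P * ((N P hP : ℕ) : k)) := by
      show Finsupp.mapDomain pPath ((x P) • iotaP k P) = _
      rw [Finsupp.mapDomain_smul, hNmap P hP, Finsupp.smul_single, smul_eq_mul]
    rw [he, Finsupp.single_apply]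
  have h5 : (∑ P ∈ x.support,
      (Finsupp.mapDomain.addMonoidHom pPath ((x P) • iotaP k P))) P₀ = (0 : k) := by
    rw [h1]; rfl
  rw [Finsupp.finset_sum_apply] at h5
  rw [Finset.sum_eq_single_of_mem P₀ hP₀
    (fun P hP hne => by rw [h6 P hP, if_neg hne])] at h5
  rw [h6 P₀ hP₀, if_pos rfl] at h5
  have hNne : ((N P₀ hP₀ : ℕ) : k) ≠ 0 := Nat.cast_ne_zero.mpr (hNpos P₀ hP₀).ne'
  have hx0 : x P₀ = 0 := by
    rcases mul_eq_zero.mp h5 with h | h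
    · exact h
    · exact absurd h hNne
  simpa using hx0
end

section
/- The map E given by erasing node labels sends kℒ into kℳ, and the restriction E: kℒ → kℳ is a homomorphism of k-algebras. -/
set_option maxHeartbeats 1000000

/-! ## Auxiliary lemmas for `erase_labels_algebra_hom` -/

section EraseHomAux

lemma eraseT_value (t : LTree) : (eraseT t).value = t.value := by
  induction t with
  | leaf x => rfl
  | node i t1 t2 ih1 ih2 => simp [eraseT, UTree.value, LTree.value, ih1, ih2]

lemma eraseT_foliage (t : LTree) : (eraseT t).foliage = t.foliage := by
  induction t with
  | leaf x => rfl
  | node i t1 t2 ih1 ih2 => simp [eraseT, UTree.foliage, LTree.foliage, ih1, ih2]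

lemma squashU_eraseF (Y : List LTree) : squashU (eraseF Y) = squash Y := by
  simp [squashU, squash, eraseF, List.map_map, Function.comp_def, eraseT_value]

lemma foliageU_eraseF (X : List LTree) : foliageU (eraseF X) = forestFoliage X := by
  induction X with
  | nil => rfl
  | cons t ts ih =>
    simp only [foliageU, forestFoliage, eraseF, List.map_cons, List.flatMap_cons] at *
    rw [eraseT_foliage, ih]

lemma eraseT_shift (m : ℕ) (t : LTree) : eraseT (t.shift m) = eraseT t := by
  induction t <;> simp [LTree.shift, eraseT, *]

lemma eraseT_graft (t : LTree) : ∀ ys : List LTree,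
    eraseT (t.graft ys).1 = ((eraseT t).graft (ys.map eraseT)).1 ∧
    (t.graft ys).2.map eraseT = ((eraseT t).graft (ys.map eraseT)).2 := by
  induction t with
  | leaf x => intro ys; cases ys <;> exact ⟨rfl, rfl⟩
  | node i t1 t2 ih1 ih2 =>
    intro ys
    obtain ⟨h1, h1'⟩ := ih1 ys
    obtain ⟨h2, h2'⟩ := ih2 (t1.graft ys).2
    rw [h1'] at h2 h2'
    simp only [LTree.graft, UTree.graft, eraseT]
    exact ⟨by rw [h1, h2], by rw [h2']⟩

lemma eraseF_graftForest : ∀ X ys : List LTree,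
    eraseF (graftForest X ys) = graftForestU (eraseF X) (ys.map eraseT)
  | [], _ => rfl
  | t :: ts, ys => by
    obtain ⟨h1, h1'⟩ := eraseT_graft t ys
    simp only [graftForest, graftForestU, eraseF, List.map_cons]
    rw [h1]
    congr 1
    rw [← h1']
    exact eraseF_graftForest ts (t.graft ys).2

lemma eraseF_bullet (X Y : List LTree) :
    eraseF (bullet X Y) = bulletU (eraseF X) (eraseF Y) := by
  unfold bullet bulletU
  rw [eraseF_graftForest]
  congr 1
  simp [eraseF, List.map_map, Function.comp_def, eraseT_shift]

variable {k : Type} [Semiring k]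

lemma EL_single (X : List LTree) (a : k) :
    EL k (Finsupp.single X a) = Finsupp.single (eraseF X) a := by
  rw [EL, Finsupp.lmapDomain_apply, Finsupp.mapDomain_single]

lemma mulL_single_single (X Y : List LTree) (a b : k) :
    mulL k (Finsupp.single X a) (Finsupp.single Y b) =
      if forestFoliage X = squash Y then Finsupp.single (bullet X Y) (a * b) else 0 := by
  unfold mulL
  rw [Finsupp.sum_single_index, Finsupp.sum_single_index]
  · split <;> simp
  · rw [Finsupp.sum_single_index] <;> split <;> simp

lemma mulM_single_single (X Y : List UTree) (a b : k) :
    mulM k (Finsupp.single X a) (Finsupp.single Y b) =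
      if foliageU X = squashU Y then Finsupp.single (bulletU X Y) (a * b) else 0 := by
  unfold mulM
  rw [Finsupp.sum_single_index, Finsupp.sum_single_index]
  · split <;> simp
  · rw [Finsupp.sum_single_index] <;> split <;> simp

lemma mulL_zero_left (g : (List LTree) →₀ k) : mulL k 0 g = 0 := by
  unfold mulL; exact Finsupp.sum_zero_index

lemma mulL_zero_right (f : (List LTree) →₀ k) : mulL k f 0 = 0 := by
  unfold mulL
  simp only [Finsupp.sum_zero_index]
  exact Finsupp.sum_fun_zero _

lemma mulM_zero_left (g : (List UTree) →₀ k) : mulM k 0 g = 0 := by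
  unfold mulM; exact Finsupp.sum_zero_index

lemma mulM_zero_right (f : (List UTree) →₀ k) : mulM k f 0 = 0 := by
  unfold mulM
  simp only [Finsupp.sum_zero_index]
  exact Finsupp.sum_fun_zero _

lemma mulL_add_left (f f' g : (List LTree) →₀ k) :
    mulL k (f + f') g = mulL k f g + mulL k f' g := by
  unfold mulL
  apply Finsupp.sum_add_index'
  · intro X; simp
  · intro X a a'
    rw [← Finsupp.sum_add]
    apply Finsupp.sum_congr
    intro Y _
    split <;> simp [add_mul, Finsupp.single_add]

lemma mulM_add_left (f f' g : (List UTree) →₀ k) :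
    mulM k (f + f') g = mulM k f g + mulM k f' g := by
  unfold mulM
  apply Finsupp.sum_add_index'
  · intro X; simp
  · intro X a a'
    rw [← Finsupp.sum_add]
    apply Finsupp.sum_congr
    intro Y _
    split <;> simp [add_mul, Finsupp.single_add]

lemma mulL_add_right (f g g' : (List LTree) →₀ k) :
    mulL k f (g + g') = mulL k f g + mulL k f g' := by
  unfold mulL
  rw [← Finsupp.sum_add]
  apply Finsupp.sum_congr
  intro X _
  apply Finsupp.sum_add_index'
  · intro Y; split <;> simp
  · intro Y b b'; split <;> simp [mul_add, Finsupp.single_add]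

lemma mulM_add_right (f g g' : (List UTree) →₀ k) :
    mulM k f (g + g') = mulM k f g + mulM k f g' := by
  unfold mulM
  rw [← Finsupp.sum_add]
  apply Finsupp.sum_congr
  intro X _
  apply Finsupp.sum_add_index'
  · intro Y; split <;> simp
  · intro Y b b'; split <;> simp [mul_add, Finsupp.single_add]

lemma EL_mul (f g : (List LTree) →₀ k) :
    EL k (mulL k f g) = mulM k (EL k f) (EL k g) := by
  induction f using Finsupp.induction_linear with
  | zero => rw [mulL_zero_left, map_zero, mulM_zero_left]
  | add f f' ihf ihf' => rw [mulL_add_left, map_add, map_add, ihf, ihf', mulM_add_left]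
  | single X a =>
    induction g using Finsupp.induction_linear with
    | zero => rw [mulL_zero_right, map_zero, mulM_zero_right]
    | add g g' ihg ihg' => rw [mulL_add_right, map_add, map_add, ihg, ihg', mulM_add_right]
    | single Y b =>
      rw [mulL_single_single, EL_single, EL_single, mulM_single_single,
        foliageU_eraseF, squashU_eraseF]
      split
      · rw [EL_single, eraseF_bullet]
      · rw [map_zero]

/-! ### The counting argument for orbit sums -/

/-- The fiber of the erasing map over `Z` inside the set of rearrangements of the
multiset `m`. -/
noncomputable def fibE (m : Multiset LTree) (Z : List UTree) : Finset (List LTree) :=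
  m.toList.permutations.toFinset.filter (fun Y => eraseF Y = Z)

lemma mem_fibE {m : Multiset LTree} {Z : List UTree} {Y : List LTree} :
    Y ∈ fibE m Z ↔ (Y : Multiset LTree) = m ∧ eraseF Y = Z := by
  simp only [fibE, Finset.mem_filter, List.mem_toFinset, List.mem_permutations]
  constructor
  · rintro ⟨h1, h2⟩
    exact ⟨by rw [← Multiset.coe_toList m]; exact Multiset.coe_eq_coe.2 h1, h2⟩
  · rintro ⟨h1, h2⟩
    refine ⟨Multiset.coe_eq_coe.1 ?_, h2⟩
    rw [Multiset.coe_toList m, h1]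

lemma fibE_cons_card (m : Multiset LTree) (x : UTree) (Z : List UTree) :
    (fibE m (x :: Z)).card
      = ∑ t ∈ m.toFinset.filter (fun t => eraseT t = x), (fibE (m.erase t) Z).card := by
  have hset : fibE m (x :: Z)
      = (m.toFinset.filter (fun t => eraseT t = x)).biUnion
          (fun t => (fibE (m.erase t) Z).image (t :: ·)) := by
    ext Y
    simp only [mem_fibE, Finset.mem_biUnion, Finset.mem_filter, Multiset.mem_toFinset,
      Finset.mem_image]
    constructor
    · rintro ⟨hm, hmap⟩
      cases Y with
      | nil => simp [eraseF] at hmap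
      | cons t Y0 =>
        rw [show eraseF (t :: Y0) = eraseT t :: eraseF Y0 from rfl, List.cons.injEq] at hmap
        have htm : t ∈ m := by
          rw [← hm]; exact Multiset.mem_coe.2 (List.mem_cons_self (a := t) (l := Y0))
        refine ⟨t, ⟨htm, hmap.1⟩, Y0, ⟨?_, hmap.2⟩, rfl⟩
        rw [← hm, ← Multiset.cons_coe, Multiset.erase_cons_head]
    · rintro ⟨t, ⟨htm, htx⟩, Y0, hY0, rfl⟩
      constructor
      · rw [← Multiset.cons_coe, hY0.1, Multiset.cons_erase htm]
      · rw [show eraseF (t :: Y0) = eraseT t :: eraseF Y0 from rfl, hY0.2, htx]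
  rw [hset, Finset.card_biUnion]
  · exact Finset.sum_congr rfl fun t _ => Finset.card_image_of_injective _ List.cons_injective
  · intro t ht t' ht' htt'
    rw [Function.onFun, Finset.disjoint_left]
    intro Y hY1 hY2
    obtain ⟨Y1, _, rfl⟩ := Finset.mem_image.1 hY1
    obtain ⟨Y2, _, h⟩ := Finset.mem_image.1 hY2
    injection h with h1 _
    exact htt' h1.symm

lemma erase_mem_symm {m : Multiset LTree} {t u : LTree} (ht : t ∈ m) (hu : u ∈ m) :
    u ∈ m.erase t ↔ t ∈ m.erase u := by
  rcases eq_or_ne u t with rfl | hne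
  · exact Iff.rfl
  · rw [Multiset.mem_erase_of_ne hne, Multiset.mem_erase_of_ne (Ne.symm hne)]
    exact iff_of_true hu ht

lemma sum_filter_erase (m : Multiset LTree) (a b : UTree) (F : Multiset LTree → ℕ) :
    (∑ t ∈ m.toFinset.filter (fun t => eraseT t = a),
      ∑ u ∈ (m.erase t).toFinset.filter (fun u => eraseT u = b), F ((m.erase t).erase u))
    = ∑ t ∈ m.toFinset, ∑ u ∈ m.toFinset,
        (if eraseT t = a ∧ eraseT u = b ∧ u ∈ m.erase t then F ((m.erase t).erase u) else 0) := by
  rw [Finset.sum_filter]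
  refine Finset.sum_congr rfl fun t htm => ?_
  by_cases hta : eraseT t = a
  · rw [if_pos hta, Finset.sum_filter]
    have hsub : (m.erase t).toFinset ⊆ m.toFinset :=
      Multiset.toFinset_subset.2 (Multiset.subset_of_le (Multiset.erase_le t m))
    rw [show (∑ u ∈ (m.erase t).toFinset, if eraseT u = b then F ((m.erase t).erase u) else 0)
        = ∑ u ∈ (m.erase t).toFinset,
            (if eraseT t = a ∧ eraseT u = b ∧ u ∈ m.erase t then F ((m.erase t).erase u) else 0)
      from Finset.sum_congr rfl fun u hu => by
        have humem : u ∈ m.erase t := Multiset.mem_toFinset.1 hu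
        by_cases hb : eraseT u = b <;> simp [hb, hta, humem]]
    refine Finset.sum_subset hsub fun u _ hnu => ?_
    rw [if_neg]
    intro hc
    exact hnu (Multiset.mem_toFinset.2 hc.2.2)
  · rw [if_neg hta]
    symm
    apply Finset.sum_eq_zero
    intro u _
    rw [if_neg]
    intro hc
    exact hta hc.1

lemma fibE_card_of_perm {Z Z' : List UTree} (h : Z.Perm Z') :
    ∀ m : Multiset LTree, (fibE m Z).card = (fibE m Z').card := by
  induction h with
  | nil => intro m; rfl
  | cons x h ih =>
    intro m
    rw [fibE_cons_card, fibE_cons_card]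
    exact Finset.sum_congr rfl fun t _ => ih _
  | swap x y l =>
    intro m
    simp only [fibE_cons_card]
    rw [sum_filter_erase m y x (fun m' => (fibE m' l).card),
      sum_filter_erase m x y (fun m' => (fibE m' l).card)]
    conv_rhs => rw [Finset.sum_comm]
    refine Finset.sum_congr rfl fun t ht => Finset.sum_congr rfl fun u hu => ?_
    have ht' := Multiset.mem_toFinset.1 ht
    have hu' := Multiset.mem_toFinset.1 hu
    by_cases hc : eraseT t = y ∧ eraseT u = x ∧ u ∈ m.erase t
    · rw [if_pos hc, if_pos ⟨hc.2.1, hc.1, (erase_mem_symm ht' hu').1 hc.2.2⟩,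
        Multiset.erase_comm]
    · rw [if_neg hc, if_neg (fun hc' => hc ⟨hc'.2.1, hc'.1, (erase_mem_symm hu' ht').1 hc'.2.2⟩)]
  | trans _ _ ih1 ih2 => intro m; exact (ih1 m).trans (ih2 m)

lemma perms_toFinset_coe (X : List LTree) :
    ((X : Multiset LTree).toList).permutations.toFinset = X.permutations.toFinset := by
  ext Y
  simp only [List.mem_toFinset, List.mem_permutations]
  have h : ((X : Multiset LTree).toList).Perm X := Multiset.coe_eq_coe.1 (Multiset.coe_toList _)
  exact ⟨fun hy => hy.trans h, fun hy => hy.trans h.symm⟩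

lemma fibE_coe (X : List LTree) (Z : List UTree) :
    fibE (↑X) Z = X.permutations.toFinset.filter (fun Y => eraseF Y = Z) := by
  unfold fibE; rw [perms_toFinset_coe]

lemma self_mem_fibE (X : List LTree) : X ∈ fibE (↑X) (eraseF X) :=
  mem_fibE.2 ⟨rfl, rfl⟩

lemma image_eraseF (X : List LTree) :
    X.permutations.toFinset.image eraseF = (eraseF X).permutations.toFinset := by
  ext Z
  simp only [Finset.mem_image, List.mem_toFinset, List.mem_permutations]
  constructor
  · rintro ⟨Y, hY, rfl⟩
    exact hY.map eraseT
  · intro hZ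
    have hcard : (fibE (↑X) Z).card = (fibE (↑X) (eraseF X)).card :=
      fibE_card_of_perm hZ _
    have hpos : 0 < (fibE (↑X) Z).card := by
      rw [hcard]
      exact Finset.card_pos.2 ⟨X, self_mem_fibE X⟩
    obtain ⟨Y, hY⟩ := Finset.card_pos.1 hpos
    rw [mem_fibE] at hY
    exact ⟨Y, Multiset.coe_eq_coe.1 hY.1, hY.2⟩

lemma EL_pol (X : List LTree) :
    EL k (pol k X) = (fibE (↑X) (eraseF X)).card • polU k (eraseF X) := by
  unfold pol polU
  rw [map_sum]
  simp only [EL_single]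
  rw [Finset.sum_comp (fun Z : List UTree => Finsupp.single Z (1 : k)) eraseF, image_eraseF,
    Finset.smul_sum]
  refine Finset.sum_congr rfl fun Z hZ => ?_
  congr 1
  rw [← fibE_coe]
  exact fibE_card_of_perm (List.mem_permutations.1 (List.mem_toFinset.1 hZ)) _

end EraseHomAux


/-- **`E : kℒ → kℳ` is an algebra homomorphism.** Erasing node labels sends `kℒ`
into `kℳ` and respects the products. -/
theorem erase_labels_algebra_hom (k : Type) [Field k] [CharZero k] :
    (∀ x ∈ LspanAll k, EL k x ∈ MspanAll k) ∧
    (∀ x ∈ LspanAll k, ∀ y ∈ LspanAll k,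
      EL k (mulL k x y) = mulM k (EL k x) (EL k y)) := by
  constructor
  · intro x hx
    induction hx using Submodule.span_induction with
    | mem y hy =>
      obtain ⟨X, hX, rfl⟩ := hy
      rw [EL_pol]
      refine nsmul_mem (Submodule.subset_span ?_) _
      exact ⟨eraseF X, fun z hz => by rw [foliageU_eraseF] at hz; exact hX.2.2 z hz, rfl⟩
    | zero => rw [map_zero]; exact zero_mem _
    | add a b _ _ iha ihb => rw [map_add]; exact add_mem iha ihb
    | smul c a _ iha => rw [map_smul]; exact Submodule.smul_mem _ _ iha
  · intro x _ y _
    exact EL_mul x y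
end
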